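/- Let α be a countable ordinal and let I and J be interpretations with I ⊑_α J. Then for every formula φ and every variable assignment h: (1) for every truth value w with F_0 ≤ w ≤ F_α, if ⟦φ⟧^J_h = w then ⟦φ⟧^I_h = w; (2) for every truth value w with T_α ≤ w ≤ T_0, if ⟦φ⟧^I_h = w then ⟦φ⟧^J_h = w; (3) for every truth value w with deg(w) < α, ⟦φ⟧^I_h = w if and only if ⟦φ⟧^J_h = w. -/

import Mathlib

/-!
Infinite-valued semantics for formula-based logic programs
(Rondogiannis–Wadge style), following Lüdecke,
"Every Formula-Based Logic Program Has a Least Infinite-Valued Model".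
-/

noncomputable section

namespace ILP

attribute [local instance] Classical.propDecidable

/-- The first uncountable ordinal. -/
def omega1 : Ordinal.{0} := Ordinal.omega 1

lemma omega1_isLimit : Order.IsSuccLimit omega1 := Cardinal.isSuccLimit_omega 1

lemma zero_lt_omega1 : (0 : Ordinal) < omega1 := omega1_isLimit.pos

lemma succ_lt_omega1 {a : Ordinal} (h : a < omega1) : a + 1 < omega1 := by
  rw [Ordinal.add_one_eq_succ]
  exact omega1_isLimit.succ_lt h

/-- Pre-truth-values: `F α`, `0`, `T α` for arbitrary ordinals `α`. -/
inductive TVPre : Type 1 where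
  | F : Ordinal → TVPre
  | zero : TVPre
  | T : Ordinal → TVPre

/-- A pre-truth-value is countable if its index is a countable ordinal. -/
def TVPre.countable : TVPre → Prop
  | .F a => a < omega1
  | .zero => True
  | .T a => a < omega1

/-- The set `W` of truth values:
`F_α` (false values) for countable `α`, `0`, and `T_α` (true values) for countable `α`. -/
def W : Type 1 := {v : TVPre // v.countable}

/-- The strict order on truth values:
`F_0 < F_1 < ... < 0 < ... < T_1 < T_0`. -/
def TVPre.lt : TVPre → TVPre → Prop
  | .F a, .F b => a < b
  | .F _, .zero => True
  | .F _, .T _ => True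
  | .zero, .T _ => True
  | .T a, .T b => b < a
  | _, _ => False

instance : LT W := ⟨fun x y => TVPre.lt x.1 y.1⟩

instance : LE W := ⟨fun x y => x = y ∨ x < y⟩

lemma TVPre.lt_trans {a b c : TVPre} (hab : a.lt b) (hbc : b.lt c) : a.lt c := by
  cases a <;> cases b <;> cases c <;> simp_all [TVPre.lt] <;>
    first | exact hab.trans hbc | exact hbc.trans hab

lemma TVPre.lt_irrefl {a : TVPre} (h : a.lt a) : False := by
  cases a <;> simp_all [TVPre.lt]

instance instLinearOrderW : LinearOrder W where
  le_refl a := Or.inl rfl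
  le_trans a b c hab hbc := by
    rcases hab with rfl | hab
    · exact hbc
    rcases hbc with rfl | hbc
    · exact Or.inr hab
    · exact Or.inr (TVPre.lt_trans hab hbc)
  le_antisymm a b hab hba := by
    rcases hab with rfl | hab
    · rfl
    rcases hba with rfl | hba
    · rfl
    exact absurd (TVPre.lt_trans hab hba) TVPre.lt_irrefl
  le_total a b := by
    obtain ⟨a1, ha⟩ := a
    obtain ⟨b1, hb⟩ := b
    have tri : a1 = b1 ∨ a1.lt b1 ∨ b1.lt a1 := by
      cases a1 <;> cases b1 <;> simp [TVPre.lt] <;> (try rename_i x y) <;>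
        (try rcases lt_trichotomy x y with h | h | h) <;> tauto
    rcases tri with h | h | h
    · exact Or.inl (Or.inl (Subtype.ext h))
    · exact Or.inl (Or.inr h)
    · exact Or.inr (Or.inr h)
  lt_iff_le_not_ge a b := by
    constructor
    · intro h
      refine ⟨Or.inr h, ?_⟩
      rintro (rfl | h')
      · exact TVPre.lt_irrefl h
      · exact TVPre.lt_irrefl (TVPre.lt_trans h h')
    · rintro ⟨rfl | h, h2⟩
      · exact absurd (Or.inl rfl) h2
      · exact h
  toDecidableLE := Classical.decRel _

/-- The false value `F_α`. -/
def WF (a : Ordinal) (h : a < omega1) : W := ⟨.F a, h⟩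

/-- The true value `T_α`. -/
def WT (a : Ordinal) (h : a < omega1) : W := ⟨.T a, h⟩

/-- The undefined value `0`. -/
def WZ : W := ⟨.zero, trivial⟩

/-- `deg w < α` : the degree of `w` (which is `∞` for `0`) is less than `α`. -/
def degLT (w : W) (α : Ordinal) : Prop :=
  match w.1 with
  | .F a => a < α
  | .zero => False
  | .T a => a < α

/-- The set of indices of true values occurring in `M`. -/
def TIdx (M : Set W) : Set Ordinal := {a | ∃ w ∈ M, w.1 = TVPre.T a}

/-- The set of indices of false values occurring in `M`. -/
def FIdx (M : Set W) : Set Ordinal := {a | ∃ w ∈ M, w.1 = TVPre.F a}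

lemma mem_lt_omega1_of_TIdx {M : Set W} {a : Ordinal} (h : a ∈ TIdx M) : a < omega1 := by
  obtain ⟨w, _, hw⟩ := h
  have := w.2
  rw [hw] at this
  exact this

lemma mem_lt_omega1_of_FIdx {M : Set W} {a : Ordinal} (h : a ∈ FIdx M) : a < omega1 := by
  obtain ⟨w, _, hw⟩ := h
  have := w.2
  rw [hw] at this
  exact this

/-- The least upper bound of a subset of `W`. -/
def Wsup (M : Set W) : W :=
  if h : (TIdx M).Nonempty then
    WT (sInf (TIdx M))
      (lt_of_le_of_lt (csInf_le' h.choose_spec) (mem_lt_omega1_of_TIdx h.choose_spec))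
  else if WZ ∈ M then WZ
  else if h2 : sSup (FIdx M) < omega1 then WF (sSup (FIdx M)) h2
  else WZ

/-- The greatest lower bound of a subset of `W`. -/
def Winf (M : Set W) : W :=
  if h : (FIdx M).Nonempty then
    WF (sInf (FIdx M))
      (lt_of_le_of_lt (csInf_le' h.choose_spec) (mem_lt_omega1_of_FIdx h.choose_spec))
  else if WZ ∈ M then WZ
  else if h2 : sSup (TIdx M) < omega1 then WT (sSup (TIdx M)) h2
  else WZ

/-- The semantics of negation on `W`. -/
def Wneg : W → W
  | ⟨.F a, h⟩ => WT (a + 1) (succ_lt_omega1 h)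
  | ⟨.zero, _⟩ => WZ
  | ⟨.T a, h⟩ => WF (a + 1) (succ_lt_omega1 h)

/-! ### Syntax -/

/-- A first-order language with finitely many predicate symbols (at least one),
finitely many function symbols and finitely many constants (at least one). -/
structure Language where
  nPred : ℕ
  predAr : Fin nPred → ℕ
  nFun : ℕ
  funAr : Fin nFun → ℕ
  nConst : ℕ
  npos : 1 ≤ nPred
  cpos : 1 ≤ nConst

variable {L : Language}

/-- Terms of the language; variables are indexed by natural numbers. -/
inductive Term (L : Language) : Type where
  | var : ℕ → Term L
  | const : Fin L.nConst → Term L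
  | func : (f : Fin L.nFun) → (Fin (L.funAr f) → Term L) → Term L

/-- A term is ground if it contains no variables. -/
def Term.ground : Term L → Prop
  | .var _ => False
  | .const _ => True
  | .func _ ts => ∀ i, (ts i).ground

/-- The Herbrand universe: the set of ground terms. -/
def HU (L : Language) : Type := {t : Term L // t.ground}

/-- Formulas of the language. -/
inductive Formula (L : Language) : Type where
  | verum : Formula L
  | falsum : Formula L
  | atom : (p : Fin L.nPred) → (Fin (L.predAr p) → Term L) → Formula L
  | neg : Formula L → Formula L
  | conj : Formula L → Formula L → Formula L
  | disj : Formula L → Formula L → Formula L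
  | all : ℕ → Formula L → Formula L
  | ex : ℕ → Formula L → Formula L

/-- A ground atom: a predicate symbol applied to ground terms.
The Herbrand base `H_B` is the type of ground atoms. -/
structure GroundAtom (L : Language) : Type where
  pred : Fin L.nPred
  args : Fin (L.predAr pred) → HU L

/-- An (infinite-valued Herbrand) interpretation. -/
def Interp (L : Language) : Type 1 := GroundAtom L → W

/-- Evaluation of a term under a variable assignment. -/
def Term.evalT (h : ℕ → HU L) : Term L → HU L
  | .var n => h n
  | .const c => ⟨.const c, trivial⟩
  | .func f ts => ⟨.func f fun i => ((ts i).evalT h).1, fun i => ((ts i).evalT h).2⟩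

/-- The infinite-valued semantics of formulas, relative to an interpretation and
a variable assignment. -/
def Formula.eval (I : Interp L) : Formula L → (ℕ → HU L) → W
  | .verum, _ => WT 0 zero_lt_omega1
  | .falsum, _ => WF 0 zero_lt_omega1
  | .atom p ts, h => I ⟨p, fun i => (ts i).evalT h⟩
  | .neg φ, h => Wneg (φ.eval I h)
  | .conj φ ψ, h => min (φ.eval I h) (ψ.eval I h)
  | .disj φ ψ, h => max (φ.eval I h) (ψ.eval I h)
  | .ex v φ, h => Wsup (Set.range fun u : HU L => φ.eval I (Function.update h v u))
  | .all v φ, h => Winf (Set.range fun u : HU L => φ.eval I (Function.update h v u))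

/-- The variables occurring in a term. -/
def Term.vars : Term L → Set ℕ
  | .var n => {n}
  | .const _ => ∅
  | .func _ ts => ⋃ i, (ts i).vars

/-- The free variables of a formula. -/
def Formula.freeVars : Formula L → Set ℕ
  | .verum => ∅
  | .falsum => ∅
  | .atom _ ts => ⋃ i, (ts i).vars
  | .neg φ => φ.freeVars
  | .conj φ ψ => φ.freeVars ∪ ψ.freeVars
  | .disj φ ψ => φ.freeVars ∪ ψ.freeVars
  | .all v φ => φ.freeVars \ {v}
  | .ex v φ => φ.freeVars \ {v}

/-- Applying a substitution to a term. -/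
def Term.subst (σ : ℕ → Term L) : Term L → Term L
  | .var n => σ n
  | .const c => .const c
  | .func f ts => .func f fun i => (ts i).subst σ

/-- Applying a substitution to a formula (bound variables are not substituted). -/
def Formula.subst (σ : ℕ → Term L) : Formula L → Formula L
  | .verum => .verum
  | .falsum => .falsum
  | .atom p ts => .atom p fun i => (ts i).subst σ
  | .neg φ => .neg (φ.subst σ)
  | .conj φ ψ => .conj (φ.subst σ) (ψ.subst σ)
  | .disj φ ψ => .disj (φ.subst σ) (ψ.subst σ)
  | .all v φ => .all v (φ.subst (Function.update σ v (Term.var v)))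
  | .ex v φ => .ex v (φ.subst (Function.update σ v (Term.var v)))

/-- A formula-based rule `A ← φ`: the head is an atom `P(t₁,…,tₛ)`
(hence distinct from `⊤` and `⊥`) and the body is an arbitrary formula. -/
structure Rule (L : Language) : Type where
  headPred : Fin L.nPred
  headArgs : Fin (L.predAr headPred) → Term L
  body : Formula L

/-- The head of a rule, as an atomic formula. -/
def Rule.headAtom (r : Rule L) : Formula L := .atom r.headPred r.headArgs

/-- A formula-based logic program: a finite set of formula-based rules. -/
structure Program (L : Language) : Type where
  rules : Set (Rule L)
  finite : rules.Finite

/-- The set `P_G` of ground instances of a program `P`: pairs `(Aσ, φσ)` obtained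
from a rule `A ← φ` of `P` and a substitution `σ` such that `Aσ` is a ground atom
and `φσ` has no free variables. -/
def groundInstances (P : Program L) : Set (GroundAtom L × Formula L) :=
  {Aφ | ∃ r ∈ P.rules, ∃ σ : ℕ → Term L,
    (∃ hg : ∀ i, ((r.headArgs i).subst σ).ground,
      Aφ.1 = ⟨r.headPred, fun i => ⟨(r.headArgs i).subst σ, hg i⟩⟩) ∧
    Aφ.2 = r.body.subst σ ∧ (r.body.subst σ).freeVars = ∅}

/-- A default variable assignment (possible since there is at least one constant). -/
def defaultAssignment (L : Language) : ℕ → HU L :=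
  fun _ => ⟨.const ⟨0, L.cpos⟩, trivial⟩

/-- The value of a closed formula (independent of the variable assignment). -/
def Formula.evalClosed (I : Interp L) (φ : Formula L) : W :=
  φ.eval I (defaultAssignment L)

/-- The immediate consequence operator `T_P`. -/
def TP (P : Program L) (I : Interp L) : Interp L :=
  fun A => Wsup {w | ∃ φ : Formula L, (A, φ) ∈ groundInstances P ∧ w = φ.evalClosed I}

/-- `I ∥ F_β` : the set of ground atoms receiving value `F_β` under `I`. -/
def Ifalse (I : Interp L) (β : Ordinal) : Set (GroundAtom L) := {A | (I A).1 = TVPre.F β}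

/-- `I ∥ T_β` : the set of ground atoms receiving value `T_β` under `I`. -/
def Itrue (I : Interp L) (β : Ordinal) : Set (GroundAtom L) := {A | (I A).1 = TVPre.T β}

/-- `I =_α J`. -/
def eqa (α : Ordinal) (I J : Interp L) : Prop :=
  ∀ β ≤ α, Ifalse I β = Ifalse J β ∧ Itrue I β = Itrue J β

/-- `I ⊑_α J`. -/
def sqa (α : Ordinal) (I J : Interp L) : Prop :=
  (∀ β < α, eqa β I J) ∧ Ifalse J α ⊆ Ifalse I α ∧ Itrue I α ⊆ Itrue J α

/-- `I ⊏_α J`. -/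
def sqlt (α : Ordinal) (I J : Interp L) : Prop := sqa α I J ∧ ¬ eqa α I J

/-- `I ⊑_∞ J`. -/
def sqinf (I J : Interp L) : Prop := I = J ∨ ∃ α < omega1, sqlt α I J

/-- `I` satisfies the rule `A ← φ`. -/
def satisfies (I : Interp L) (r : Rule L) : Prop :=
  ∀ h : ℕ → HU L, r.body.eval I h ≤ r.headAtom.eval I h

/-- `I` is a model of `P`. -/
def isModel (I : Interp L) (P : Program L) : Prop := ∀ r ∈ P.rules, satisfies I r

/-- The transfinite iterates `T^β_{P,α}(I)`. -/
def iter (P : Program L) (α : Ordinal) (hα : α < omega1) (I : Interp L)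
    (β : Ordinal) : Interp L :=
  Ordinal.limitRecOn β I (fun _ J => TP P J)
    (fun β _ ih A =>
      if degLT (I A) α then I A
      else if ∃ γ, ∃ hγ : γ < β, (ih γ hγ A).1 = TVPre.T α then WT α hα
      else if ∀ γ, ∀ hγ : γ < β, (ih γ hγ A).1 = TVPre.F α then WF α hα
      else WF (α + 1) (succ_lt_omega1 hα))

/-- The union `⊔_{γ<α} I_γ` of a family of interpretations. -/
def unionInterp (α : Ordinal) (hα : α < omega1) (Ig : ∀ γ, γ < α → Interp L) :
    Interp L := fun A =>
  if h : ∃ ζ, ∃ hζ : ζ < α, ((Ig ζ hζ) A).1 = TVPre.F ζ ∨ ((Ig ζ hζ) A).1 = TVPre.T ζ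
  then Ig h.choose h.choose_spec.choose A
  else WF α hα

/-- The approximants `M_α` of a program `P`. -/
def approx (P : Program L) (α : Ordinal) : Interp L :=
  if hα : α < omega1 then
    if (∀ γ, ∀ _ : γ < α, ∀ ζ, ζ < γ → eqa ζ (approx P ζ) (approx P γ)) ∧
        sqa α (unionInterp α hα fun γ _ => approx P γ)
          (TP P (unionInterp α hα fun γ _ => approx P γ))
    then iter P α hα (unionInterp α hα fun γ _ => approx P γ) omega1
    else fun _ => WF 0 zero_lt_omega1
  else fun _ => WF 0 zero_lt_omega1
termination_by α
decreasing_by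
  all_goals first | assumption | exact lt_trans ‹_› ‹_›

/-- The depth `δ_P` of a program `P`. -/
def depth (P : Program L) : Ordinal :=
  sInf {δ | δ < omega1 ∧ ∀ γ, δ ≤ γ → γ < omega1 →
    Ifalse (approx P γ) γ = ∅ ∧ Itrue (approx P γ) γ = ∅}

/-- The least infinite-valued model `M_P` of a program `P`. -/
def MP (P : Program L) : Interp L := fun A =>
  if degLT (approx P (depth P) A) (depth P) then approx P (depth P) A else WZ

/-! ### Three-valued semantics -/

/-- The three truth values `F < 0 < T`. -/
inductive TV3 : Type where
  | F : TV3
  | Z : TV3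
  | T : TV3
deriving DecidableEq

/-- Numeric coding of the three truth values. -/
def TV3.toNat : TV3 → ℕ
  | .F => 0
  | .Z => 1
  | .T => 2

instance : LinearOrder TV3 :=
  LinearOrder.lift' TV3.toNat (fun a b => by
    cases a <;> cases b <;> simp [TV3.toNat])

/-- A three-valued interpretation. -/
def Interp3 (L : Language) : Type := GroundAtom L → TV3

/-- Supremum of a set of three-valued truth values. -/
def sup3 (S : Set TV3) : TV3 :=
  if TV3.T ∈ S then .T else if TV3.Z ∈ S then .Z else .F

/-- Infimum of a set of three-valued truth values. -/
def inf3 (S : Set TV3) : TV3 :=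
  if TV3.F ∈ S then .F else if TV3.Z ∈ S then .Z else .T

/-- Three-valued negation. -/
def neg3 : TV3 → TV3
  | .F => .T
  | .Z => .Z
  | .T => .F

/-- The three-valued semantics of formulas. -/
def Formula.eval3 (K : Interp3 L) : Formula L → (ℕ → HU L) → TV3
  | .verum, _ => .T
  | .falsum, _ => .F
  | .atom p ts, h => K ⟨p, fun i => (ts i).evalT h⟩
  | .neg φ, h => neg3 (φ.eval3 K h)
  | .conj φ ψ, h => min (φ.eval3 K h) (ψ.eval3 K h)
  | .disj φ ψ, h => max (φ.eval3 K h) (ψ.eval3 K h)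
  | .ex v φ, h => sup3 (Set.range fun u : HU L => φ.eval3 K (Function.update h v u))
  | .all v φ, h => inf3 (Set.range fun u : HU L => φ.eval3 K (Function.update h v u))

/-- Collapsing all false values to `F` and all true values to `T`. -/
def collapse : W → TV3 := fun w =>
  match w.1 with
  | .F _ => .F
  | .zero => .Z
  | .T _ => .T

/-- The collapse of an infinite-valued interpretation. -/
def collapseI (I : Interp L) : Interp3 L := fun A => collapse (I A)

/-- `K` is a three-valued model of `P`. -/
def isModel3 (K : Interp3 L) (P : Program L) : Prop :=
  ∀ r ∈ P.rules, ∀ h : ℕ → HU L, r.body.eval3 K h ≤ r.headAtom.eval3 K h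

/-- The three-valued interpretation `M_{P,3}`. -/
def MP3 (P : Program L) : Interp3 L := collapseI (MP P)

/-- The negation degree of a formula. -/
def Formula.negDeg : Formula L → ℕ
  | .verum => 0
  | .falsum => 0
  | .atom _ _ => 0
  | .neg φ => φ.negDeg + 1
  | .conj φ ψ => max φ.negDeg ψ.negDeg
  | .disj φ ψ => max φ.negDeg ψ.negDeg
  | .all _ φ => φ.negDeg
  | .ex _ φ => φ.negDeg



section ExtensionAux

variable {L : Language}

lemma WF_lt_WF_iff {a b : Ordinal} {ha hb} : WF a ha < WF b hb ↔ a < b := Iff.rfl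
lemma WT_lt_WT_iff {a b : Ordinal} {ha hb} : WT a ha < WT b hb ↔ b < a := Iff.rfl
lemma WF_lt_WZ {a : Ordinal} {ha} : WF a ha < WZ := trivial
lemma WF_lt_WT {a b : Ordinal} {ha hb} : WF a ha < WT b hb := trivial
lemma WZ_lt_WT {a : Ordinal} {ha} : WZ < WT a ha := trivial

lemma WF_le_WF_iff {a b : Ordinal} {ha hb} : WF a ha ≤ WF b hb ↔ a ≤ b := by
  constructor
  · intro h
    rcases h.lt_or_eq with h | h
    · exact (WF_lt_WF_iff.mp h).le
    · exact (TVPre.F.inj (congrArg Subtype.val h)).le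
  · intro h
    rcases h.lt_or_eq with h | rfl
    · exact (WF_lt_WF_iff.mpr h).le
    · exact le_rfl

lemma WT_le_WT_iff {a b : Ordinal} {ha hb} : WT a ha ≤ WT b hb ↔ b ≤ a := by
  constructor
  · intro h
    rcases h.lt_or_eq with h | h
    · exact (WT_lt_WT_iff.mp h).le
    · exact (TVPre.T.inj (congrArg Subtype.val h)).ge
  · intro h
    rcases h.lt_or_eq with h | h
    · exact (WT_lt_WT_iff.mpr h).le
    · exact le_of_eq (by cases h; rfl)

lemma F_lt_omega1 {w : W} {a : Ordinal} (h : w.1 = TVPre.F a) : a < omega1 := by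
  have := w.2; rw [h] at this; exact this

lemma T_lt_omega1 {w : W} {a : Ordinal} (h : w.1 = TVPre.T a) : a < omega1 := by
  have := w.2; rw [h] at this; exact this

lemma eq_WF {w : W} {a : Ordinal} (h : w.1 = TVPre.F a) : w = WF a (F_lt_omega1 h) :=
  Subtype.ext h

lemma eq_WT {w : W} {a : Ordinal} (h : w.1 = TVPre.T a) : w = WT a (T_lt_omega1 h) :=
  Subtype.ext h

/-- The key relation between `I`-values and `J`-values. -/
def Rel (α : Ordinal) (hα : α < omega1) (v u : W) : Prop :=
  v = u ∨ (WF α hα ≤ v ∧ v < WT α hα ∧ WF α hα < u ∧ u ≤ WT α hα)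

variable {α : Ordinal} {hα : α < omega1} {v u v' u' : W}

lemma Rel.eqFa (h : Rel α hα v u) {b : Ordinal} (hb : b ≤ α) (hu : u.1 = TVPre.F b) :
    v = u := by
  rcases h with h | ⟨_, _, h3, _⟩
  · exact h
  · exfalso
    rw [eq_WF hu] at h3
    exact absurd (WF_lt_WF_iff.mp h3) (not_lt.mpr hb)

lemma Rel.eqTb (h : Rel α hα v u) {b : Ordinal} (hb : b ≤ α) (hv : v.1 = TVPre.T b) :
    u = v := by
  rcases h with h | ⟨_, h2, _, _⟩
  · exact h.symm
  · exfalso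
    rw [eq_WT hv] at h2
    exact absurd (WT_lt_WT_iff.mp h2) (not_lt.mpr hb)

lemma Rel.eqFc (h : Rel α hα v u) {b : Ordinal} (hb : b < α) (hv : v.1 = TVPre.F b) :
    u = v := by
  rcases h with h | ⟨h1, _, _, _⟩
  · exact h.symm
  · exfalso
    rw [eq_WF hv] at h1
    exact absurd (WF_le_WF_iff.mp h1) (not_le.mpr hb)

lemma Rel.eqTd (h : Rel α hα v u) {b : Ordinal} (hb : b < α) (hu : u.1 = TVPre.T b) :
    v = u := by
  rcases h with h | ⟨_, _, _, h4⟩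
  · exact h
  · exfalso
    rw [eq_WT hu] at h4
    exact absurd (WT_le_WT_iff.mp h4) (not_le.mpr hb)

lemma rel_of_clauses
    (c1 : ∀ b ≤ α, u.1 = TVPre.F b → v = u)
    (c2 : ∀ b ≤ α, v.1 = TVPre.T b → u = v)
    (c3 : ∀ b < α, v.1 = TVPre.F b → u = v)
    (c4 : ∀ b < α, u.1 = TVPre.T b → v = u) : Rel α hα v u := by
  by_cases hvu : v = u
  · exact Or.inl hvu
  right
  refine ⟨?_, ?_, ?_, ?_⟩
  · obtain ⟨v1, hv2⟩ := v
    cases v1 with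
    | F a =>
      rcases lt_or_ge a α with h | h
      · exact absurd (c3 a h rfl).symm hvu
      · exact WF_le_WF_iff.mpr h
    | zero => exact WF_lt_WZ.le
    | T a => exact WF_lt_WT.le
  · obtain ⟨v1, hv2⟩ := v
    cases v1 with
    | F a => exact WF_lt_WT
    | zero => exact WZ_lt_WT
    | T a =>
      rcases le_or_gt a α with h | h
      · exact absurd (c2 a h rfl).symm hvu
      · exact WT_lt_WT_iff.mpr h
  · obtain ⟨u1, hu2⟩ := u
    cases u1 with
    | F a =>
      rcases le_or_gt a α with h | h
      · exact absurd (c1 a h rfl) hvu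
      · exact WF_lt_WF_iff.mpr h
    | zero => exact WF_lt_WZ
    | T a => exact WF_lt_WT
  · obtain ⟨u1, hu2⟩ := u
    cases u1 with
    | F a => exact WF_lt_WT.le
    | zero => exact WZ_lt_WT.le
    | T a =>
      rcases lt_or_ge a α with h | h
      · exact absurd (c4 a h rfl) hvu
      · exact WT_le_WT_iff.mpr h

end ExtensionAux

section ExtensionAux2

variable {L : Language} {α : Ordinal} {hα : α < omega1} {v u v' u' : W}

lemma rel_refl : Rel α hα v v := Or.inl rfl

lemma lt_succ_ord (a : Ordinal) : a < a + 1 := by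
  rw [Ordinal.add_one_eq_succ]; exact Order.lt_succ a

lemma rel_neg (h : Rel α hα v u) : Rel α hα (Wneg v) (Wneg u) := by
  apply rel_of_clauses
  · intro b hb hF
    obtain ⟨u1, hu2⟩ := u
    cases u1 with
    | F a => exact absurd hF (by simp [Wneg, WT])
    | zero => exact absurd hF (by simp [Wneg, WZ])
    | T a =>
      have hab : a + 1 = b := by
        have : (Wneg ⟨TVPre.T a, hu2⟩).1 = TVPre.F (a + 1) := rfl
        rw [this] at hF; exact TVPre.F.inj hF
      have ha : a < α := lt_of_lt_of_le (hab ▸ lt_succ_ord a) hb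
      rw [h.eqTd ha rfl]
  · intro b hb hT
    obtain ⟨v1, hv2⟩ := v
    cases v1 with
    | F a =>
      have hab : a + 1 = b := by
        have : (Wneg ⟨TVPre.F a, hv2⟩).1 = TVPre.T (a + 1) := rfl
        rw [this] at hT; exact TVPre.T.inj hT
      have ha : a < α := lt_of_lt_of_le (hab ▸ lt_succ_ord a) hb
      rw [h.eqFc ha rfl]
    | zero => exact absurd hT (by simp [Wneg, WZ])
    | T a => exact absurd hT (by simp [Wneg, WF])
  · intro b hb hF
    obtain ⟨v1, hv2⟩ := v
    cases v1 with
    | F a => exact absurd hF (by simp [Wneg, WT])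
    | zero => exact absurd hF (by simp [Wneg, WZ])
    | T a =>
      have hab : a + 1 = b := by
        have : (Wneg ⟨TVPre.T a, hv2⟩).1 = TVPre.F (a + 1) := rfl
        rw [this] at hF; exact TVPre.F.inj hF
      have ha : a ≤ α := le_of_lt (lt_trans (hab ▸ lt_succ_ord a) hb)
      rw [h.eqTb ha rfl]
  · intro b hb hT
    obtain ⟨u1, hu2⟩ := u
    cases u1 with
    | F a =>
      have hab : a + 1 = b := by
        have : (Wneg ⟨TVPre.F a, hu2⟩).1 = TVPre.T (a + 1) := rfl
        rw [this] at hT; exact TVPre.T.inj hT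
      have ha : a ≤ α := le_of_lt (lt_trans (hab ▸ lt_succ_ord a) hb)
      rw [h.eqFa ha rfl]
    | zero => exact absurd hT (by simp [Wneg, WZ])
    | T a => exact absurd hT (by simp [Wneg, WF])

lemma rel_min (h : Rel α hα v u) (h' : Rel α hα v' u') :
    Rel α hα (min v v') (min u u') := by
  rcases h with rfl | ⟨b1, b2, b3, b4⟩
  · rcases h' with rfl | ⟨b1', b2', b3', b4'⟩
    · exact rel_refl
    · rcases le_or_gt v (WF α hα) with hv | hv
      · left
        rw [min_eq_left (hv.trans b1'), min_eq_left (hv.trans b3'.le)]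
      · rcases le_or_gt (WT α hα) v with hv2 | hv2
        · right
          rw [min_eq_right (b2'.le.trans hv2), min_eq_right (b4'.trans hv2)]
          exact ⟨b1', b2', b3', b4'⟩
        · right
          exact ⟨le_min hv.le b1', lt_of_le_of_lt (min_le_left _ _) hv2,
            lt_min hv b3', le_trans (min_le_right _ _) b4'⟩
  · rcases h' with rfl | ⟨b1', b2', b3', b4'⟩
    · rcases le_or_gt v' (WF α hα) with hv | hv
      · left
        rw [min_eq_right (hv.trans b1), min_eq_right (hv.trans b3.le)]
      · rcases le_or_gt (WT α hα) v' with hv2 | hv2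
        · right
          rw [min_eq_left (b2.le.trans hv2), min_eq_left (b4.trans hv2)]
          exact ⟨b1, b2, b3, b4⟩
        · right
          exact ⟨le_min b1 hv.le, lt_of_le_of_lt (min_le_right _ _) hv2,
            lt_min b3 hv, le_trans (min_le_left _ _) b4⟩
    · right
      exact ⟨le_min b1 b1', lt_of_le_of_lt (min_le_left _ _) b2,
        lt_min b3 b3', le_trans (min_le_left _ _) b4⟩

lemma rel_max (h : Rel α hα v u) (h' : Rel α hα v' u') :
    Rel α hα (max v v') (max u u') := by
  rcases h with rfl | ⟨b1, b2, b3, b4⟩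
  · rcases h' with rfl | ⟨b1', b2', b3', b4'⟩
    · exact rel_refl
    · rcases le_or_gt (WT α hα) v with hv | hv
      · left
        rw [max_eq_left (b2'.le.trans hv), max_eq_left (b4'.trans hv)]
      · rcases le_or_gt v (WF α hα) with hv2 | hv2
        · right
          rw [max_eq_right (hv2.trans b1'), max_eq_right (hv2.trans b3'.le)]
          exact ⟨b1', b2', b3', b4'⟩
        · right
          exact ⟨le_trans b1' (le_max_right _ _), max_lt hv b2',
            lt_of_lt_of_le b3' (le_max_right _ _), max_le hv.le b4'⟩
  · rcases h' with rfl | ⟨b1', b2', b3', b4'⟩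
    · rcases le_or_gt (WT α hα) v' with hv | hv
      · left
        rw [max_eq_right (b2.le.trans hv), max_eq_right (b4.trans hv)]
      · rcases le_or_gt v' (WF α hα) with hv2 | hv2
        · right
          rw [max_eq_left (hv2.trans b1), max_eq_left (hv2.trans b3.le)]
          exact ⟨b1, b2, b3, b4⟩
        · right
          exact ⟨le_trans b1 (le_max_left _ _), max_lt b2 hv,
            lt_of_lt_of_le b3 (le_max_left _ _), max_le b4 hv.le⟩
    · right
      exact ⟨le_trans b1 (le_max_left _ _), max_lt b2 b2',
        lt_of_lt_of_le b3 (le_max_left _ _), max_le b4 b4'⟩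

end ExtensionAux2

section ExtensionAux3

variable {M : Set W} {w x : W}

lemma FIdx_bdd (M : Set W) : BddAbove (FIdx M) :=
  ⟨omega1, fun _ ha => (mem_lt_omega1_of_FIdx ha).le⟩

lemma TIdx_bdd (M : Set W) : BddAbove (TIdx M) :=
  ⟨omega1, fun _ ha => (mem_lt_omega1_of_TIdx ha).le⟩

lemma Wsup_upper (hw : w ∈ M) : w ≤ Wsup M := by
  unfold Wsup
  split_ifs with h1 h2 h3
  · obtain ⟨w1, hw2⟩ := w
    cases w1 with
    | F a => exact WF_lt_WT.le
    | zero => exact WZ_lt_WT.le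
    | T a =>
      exact WT_le_WT_iff.mpr (csInf_le' ⟨⟨TVPre.T a, hw2⟩, hw, rfl⟩)
  · obtain ⟨w1, hw2⟩ := w
    cases w1 with
    | F a => exact WF_lt_WZ.le
    | zero => exact le_rfl
    | T a => exact absurd ⟨a, ⟨TVPre.T a, hw2⟩, hw, rfl⟩ h1
  · obtain ⟨w1, hw2⟩ := w
    cases w1 with
    | F a => exact WF_le_WF_iff.mpr (le_csSup (FIdx_bdd M) ⟨⟨TVPre.F a, hw2⟩, hw, rfl⟩)
    | zero => exact absurd hw h2
    | T a => exact absurd ⟨a, ⟨TVPre.T a, hw2⟩, hw, rfl⟩ h1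
  · obtain ⟨w1, hw2⟩ := w
    cases w1 with
    | F a => exact WF_lt_WZ.le
    | zero => exact absurd hw h2
    | T a => exact absurd ⟨a, ⟨TVPre.T a, hw2⟩, hw, rfl⟩ h1

lemma Wsup_least (h : ∀ w ∈ M, w ≤ x) : Wsup M ≤ x := by
  unfold Wsup
  split_ifs with h1 h2 h3
  · obtain ⟨w, hw, hw1⟩ := csInf_mem (s := TIdx M) h1
    have : w = WT (sInf (TIdx M)) (lt_of_le_of_lt (csInf_le' h1.choose_spec)
        (mem_lt_omega1_of_TIdx h1.choose_spec)) := Subtype.ext hw1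
    rw [← this]
    exact h w hw
  · exact h _ h2
  · obtain ⟨x1, hx2⟩ := x
    cases x1 with
    | F c =>
      refine WF_le_WF_iff.mpr (csSup_le' ?_)
      rintro a ⟨w, hw, hw1⟩
      have := h w hw
      rw [eq_WF hw1] at this
      exact WF_le_WF_iff.mp this
    | zero => exact WF_lt_WZ.le
    | T c => exact WF_lt_WT.le
  · obtain ⟨x1, hx2⟩ := x
    cases x1 with
    | F c =>
      exfalso
      apply h3
      refine lt_of_le_of_lt (csSup_le' ?_) hx2
      rintro a ⟨w, hw, hw1⟩
      have := h w hw
      rw [eq_WF hw1] at this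
      exact WF_le_WF_iff.mp this
    | zero => exact le_rfl
    | T c => exact WZ_lt_WT.le

lemma Wsup_eq_T {b : Ordinal} {hb : b < omega1} (h : Wsup M = WT b hb) :
    WT b hb ∈ M := by
  unfold Wsup at h
  split_ifs at h with h1 h2 h3
  · obtain ⟨w, hw, hw1⟩ := csInf_mem (s := TIdx M) h1
    have hb' : sInf (TIdx M) = b := TVPre.T.inj (congrArg Subtype.val h)
    have : w = WT b hb := Subtype.ext (by rw [hw1, hb']; rfl)
    exact this ▸ hw
  · exact absurd (congrArg Subtype.val h) (by simp [WZ, WT])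
  · exact absurd (congrArg Subtype.val h) (by simp [WF, WT])
  · exact absurd (congrArg Subtype.val h) (by simp [WZ, WT])

lemma Winf_lower (hw : w ∈ M) : Winf M ≤ w := by
  unfold Winf
  split_ifs with h1 h2 h3
  · obtain ⟨w1, hw2⟩ := w
    cases w1 with
    | F a => exact WF_le_WF_iff.mpr (csInf_le' ⟨⟨TVPre.F a, hw2⟩, hw, rfl⟩)
    | zero => exact WF_lt_WZ.le
    | T a => exact WF_lt_WT.le
  · obtain ⟨w1, hw2⟩ := w
    cases w1 with
    | F a => exact absurd ⟨a, ⟨TVPre.F a, hw2⟩, hw, rfl⟩ h1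
    | zero => exact le_rfl
    | T a => exact WZ_lt_WT.le
  · obtain ⟨w1, hw2⟩ := w
    cases w1 with
    | F a => exact absurd ⟨a, ⟨TVPre.F a, hw2⟩, hw, rfl⟩ h1
    | zero => exact absurd hw h2
    | T a => exact WT_le_WT_iff.mpr (le_csSup (TIdx_bdd M) ⟨⟨TVPre.T a, hw2⟩, hw, rfl⟩)
  · obtain ⟨w1, hw2⟩ := w
    cases w1 with
    | F a => exact absurd ⟨a, ⟨TVPre.F a, hw2⟩, hw, rfl⟩ h1
    | zero => exact absurd hw h2
    | T a => exact WZ_lt_WT.le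

lemma Winf_greatest (h : ∀ w ∈ M, x ≤ w) : x ≤ Winf M := by
  unfold Winf
  split_ifs with h1 h2 h3
  · obtain ⟨w, hw, hw1⟩ := csInf_mem (s := FIdx M) h1
    have : w = WF (sInf (FIdx M)) (lt_of_le_of_lt (csInf_le' h1.choose_spec)
        (mem_lt_omega1_of_FIdx h1.choose_spec)) := Subtype.ext hw1
    rw [← this]
    exact h w hw
  · exact h _ h2
  · obtain ⟨x1, hx2⟩ := x
    cases x1 with
    | F c => exact WF_lt_WT.le
    | zero => exact WZ_lt_WT.le
    | T c =>
      refine WT_le_WT_iff.mpr (csSup_le' ?_)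
      rintro a ⟨w, hw, hw1⟩
      have := h w hw
      rw [eq_WT hw1] at this
      exact WT_le_WT_iff.mp this
  · obtain ⟨x1, hx2⟩ := x
    cases x1 with
    | F c => exact WF_lt_WZ.le
    | zero => exact le_rfl
    | T c =>
      exfalso
      apply h3
      refine lt_of_le_of_lt (csSup_le' ?_) hx2
      rintro a ⟨w, hw, hw1⟩
      have := h w hw
      rw [eq_WT hw1] at this
      exact WT_le_WT_iff.mp this

lemma Winf_eq_F {b : Ordinal} {hb : b < omega1} (h : Winf M = WF b hb) :
    WF b hb ∈ M := by
  unfold Winf at h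
  split_ifs at h with h1 h2 h3
  · obtain ⟨w, hw, hw1⟩ := csInf_mem (s := FIdx M) h1
    have hb' : sInf (FIdx M) = b := TVPre.F.inj (congrArg Subtype.val h)
    have : w = WF b hb := Subtype.ext (by rw [hw1, hb']; rfl)
    exact this ▸ hw
  · exact absurd (congrArg Subtype.val h) (by simp [WZ, WF])
  · exact absurd (congrArg Subtype.val h) (by simp [WT, WF])
  · exact absurd (congrArg Subtype.val h) (by simp [WZ, WF])

end ExtensionAux3

section ExtensionAux4

variable {L : Language} {α : Ordinal} {hα : α < omega1}

lemma rel_sup {ι : Type*} {f g : ι → W} (h : ∀ t, Rel α hα (f t) (g t)) :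
    Rel α hα (Wsup (Set.range f)) (Wsup (Set.range g)) := by
  apply rel_of_clauses
  · intro b hb hF
    have hu : Wsup (Set.range g) = WF b (F_lt_omega1 hF) := eq_WF hF
    have hfg : f = g := by
      funext t
      rcases h t with he | ⟨_, _, b3, _⟩
      · exact he
      · exfalso
        have hgt : g t ≤ WF α hα :=
          le_trans (le_trans (Wsup_upper (Set.mem_range_self t)) hu.le) (WF_le_WF_iff.mpr hb)
        exact absurd (lt_of_lt_of_le b3 hgt) (lt_irrefl _)
    rw [hfg]
  · intro b hb hT
    have hb1 := T_lt_omega1 hT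
    have hv : Wsup (Set.range f) = WT b hb1 := eq_WT hT
    obtain ⟨t, ht⟩ : ∃ t, f t = WT b hb1 := Wsup_eq_T hv
    have hgt : g t = WT b hb1 := by
      rcases h t with he | ⟨_, b2, _, _⟩
      · rw [← he, ht]
      · exfalso
        rw [ht] at b2
        exact absurd (WT_lt_WT_iff.mp b2) (not_lt.mpr hb)
    rw [hv]
    refine le_antisymm (Wsup_least ?_) (hgt ▸ Wsup_upper (Set.mem_range_self t))
    rintro w ⟨s, rfl⟩
    rcases h s with he | ⟨_, _, _, b4⟩
    · rw [← he]
      exact le_trans (Wsup_upper (Set.mem_range_self s)) hv.le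
    · exact le_trans b4 (WT_le_WT_iff.mpr hb)
  · intro b hb hF
    have hv : Wsup (Set.range f) = WF b (F_lt_omega1 hF) := eq_WF hF
    have hfg : f = g := by
      funext t
      rcases h t with he | ⟨b1, _, _, _⟩
      · exact he
      · exfalso
        have hft : f t ≤ WF α hα :=
          le_trans (le_trans (Wsup_upper (Set.mem_range_self t)) hv.le) (WF_le_WF_iff.mpr hb.le)
        have : WF α hα ≤ WF b (F_lt_omega1 hF) :=
          le_trans b1 (le_trans (Wsup_upper (Set.mem_range_self t)) hv.le)
        exact absurd (WF_le_WF_iff.mp this) (not_le.mpr hb)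
    rw [hfg]
  · intro b hb hT
    have hb1 := T_lt_omega1 hT
    have hu : Wsup (Set.range g) = WT b hb1 := eq_WT hT
    obtain ⟨t, ht⟩ : ∃ t, g t = WT b hb1 := Wsup_eq_T hu
    have hft : f t = WT b hb1 := by
      rcases h t with he | ⟨_, _, _, b4⟩
      · rw [he, ht]
      · exfalso
        rw [ht] at b4
        exact absurd (WT_le_WT_iff.mp b4) (not_le.mpr hb)
    rw [hu]
    refine le_antisymm (Wsup_least ?_) (hft ▸ Wsup_upper (Set.mem_range_self t))
    rintro w ⟨s, rfl⟩
    rcases h s with he | ⟨_, b2, _, _⟩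
    · rw [he]
      exact le_trans (Wsup_upper (Set.mem_range_self s)) hu.le
    · exact le_trans b2.le (WT_le_WT_iff.mpr hb.le)

lemma rel_inf {ι : Type*} {f g : ι → W} (h : ∀ t, Rel α hα (f t) (g t)) :
    Rel α hα (Winf (Set.range f)) (Winf (Set.range g)) := by
  apply rel_of_clauses
  · intro b hb hF
    have hb1 := F_lt_omega1 hF
    have hu : Winf (Set.range g) = WF b hb1 := eq_WF hF
    obtain ⟨t, ht⟩ : ∃ t, g t = WF b hb1 := Winf_eq_F hu
    have hft : f t = WF b hb1 := by
      rcases h t with he | ⟨_, _, b3, _⟩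
      · rw [he, ht]
      · exfalso
        rw [ht] at b3
        exact absurd (lt_of_lt_of_le b3 (WF_le_WF_iff.mpr hb)) (lt_irrefl _)
    rw [hu]
    refine le_antisymm (hft ▸ Winf_lower (Set.mem_range_self t)) (Winf_greatest ?_)
    rintro w ⟨s, rfl⟩
    rcases h s with he | ⟨b1, _, _, _⟩
    · rw [he]
      exact le_trans hu.ge (Winf_lower (Set.mem_range_self s))
    · exact le_trans (WF_le_WF_iff.mpr hb) b1
  · intro b hb hT
    have hv : Winf (Set.range f) = WT b (T_lt_omega1 hT) := eq_WT hT
    have hfg : f = g := by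
      funext t
      rcases h t with he | ⟨_, b2, _, _⟩
      · exact he
      · exfalso
        have hft : WT α hα ≤ f t :=
          le_trans (WT_le_WT_iff.mpr hb) (le_trans hv.ge (Winf_lower (Set.mem_range_self t)))
        exact absurd (lt_of_le_of_lt hft b2) (lt_irrefl _)
    rw [hfg]
  · intro b hb hF
    have hb1 := F_lt_omega1 hF
    have hv : Winf (Set.range f) = WF b hb1 := eq_WF hF
    obtain ⟨t, ht⟩ : ∃ t, f t = WF b hb1 := Winf_eq_F hv
    have hgt : g t = WF b hb1 := by
      rcases h t with he | ⟨b1, _, _, _⟩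
      · rw [← he, ht]
      · exfalso
        rw [ht] at b1
        exact absurd (WF_le_WF_iff.mp b1) (not_le.mpr hb)
    rw [hv]
    refine le_antisymm (hgt ▸ Winf_lower (Set.mem_range_self t)) (Winf_greatest ?_)
    rintro w ⟨s, rfl⟩
    rcases h s with he | ⟨_, _, b3, _⟩
    · rw [← he]
      exact le_trans hv.ge (Winf_lower (Set.mem_range_self s))
    · exact le_trans (WF_le_WF_iff.mpr hb.le) b3.le
  · intro b hb hT
    have hu : Winf (Set.range g) = WT b (T_lt_omega1 hT) := eq_WT hT
    have hfg : f = g := by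
      funext t
      rcases h t with he | ⟨_, _, _, b4⟩
      · exact he
      · exfalso
        have h5 : WT α hα < WT b (T_lt_omega1 hT) := WT_lt_WT_iff.mpr hb
        have hgt : WT α hα < g t :=
          lt_of_lt_of_le h5 (hu ▸ Winf_lower (Set.mem_range_self t))
        exact absurd b4 (not_le.mpr hgt)
    rw [hfg]

lemma rel_atom {I J : Interp L} (hIJ : sqa α I J) (A : GroundAtom L) :
    Rel α hα (I A) (J A) := by
  obtain ⟨h1, h2, h3⟩ := hIJ
  apply rel_of_clauses
  · intro b hb hF
    rcases lt_or_eq_of_le hb with hb' | rfl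
    · have he := ((h1 b hb') b le_rfl).1
      rw [Set.ext_iff] at he
      exact Subtype.ext (((he A).mpr hF).trans hF.symm)
    · exact Subtype.ext ((h2 hF).trans hF.symm)
  · intro b hb hT
    rcases lt_or_eq_of_le hb with hb' | rfl
    · have he := ((h1 b hb') b le_rfl).2
      rw [Set.ext_iff] at he
      exact Subtype.ext (((he A).mp hT).trans hT.symm)
    · exact Subtype.ext ((h3 hT).trans hT.symm)
  · intro b hb hF
    have he := ((h1 b hb) b le_rfl).1
    rw [Set.ext_iff] at he
    exact Subtype.ext (((he A).mp hF).trans hF.symm)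
  · intro b hb hT
    have he := ((h1 b hb) b le_rfl).2
    rw [Set.ext_iff] at he
    exact Subtype.ext (((he A).mpr hT).trans hT.symm)

lemma rel_eval {I J : Interp L} (hIJ : sqa α I J) (φ : Formula L) :
    ∀ h : ℕ → HU L, Rel α hα (φ.eval I h) (φ.eval J h) := by
  induction φ with
  | verum => intro h; exact rel_refl
  | falsum => intro h; exact rel_refl
  | atom p ts => intro h; exact rel_atom hIJ _
  | neg φ ih => intro h; exact rel_neg (ih h)
  | conj φ ψ ih1 ih2 => intro h; exact rel_min (ih1 h) (ih2 h)
  | disj φ ψ ih1 ih2 => intro h; exact rel_max (ih1 h) (ih2 h)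
  | all v φ ih => intro h; exact rel_inf (fun u => ih _)
  | ex v φ ih => intro h; exact rel_sup (fun u => ih _)

end ExtensionAux4

/-- Extension Theorem I. -/
theorem extension_theorem_I {L : Language} (α : Ordinal) (hα : α < omega1)
    (I J : Interp L) (hIJ : sqa α I J) (φ : Formula L) (h : ℕ → HU L) :
    (∀ w : W, (∃ b ≤ α, w.1 = TVPre.F b) → φ.eval J h = w → φ.eval I h = w) ∧
    (∀ w : W, (∃ b ≤ α, w.1 = TVPre.T b) → φ.eval I h = w → φ.eval J h = w) ∧
    (∀ w : W, degLT w α → (φ.eval I h = w ↔ φ.eval J h = w)) := by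
  have key : Rel α hα (φ.eval I h) (φ.eval J h) := rel_eval hIJ φ h
  refine ⟨?_, ?_, ?_⟩
  · rintro w ⟨b, hb, hw⟩ hJ
    exact (key.eqFa hb (by rw [hJ]; exact hw)).trans hJ
  · rintro w ⟨b, hb, hw⟩ hI
    exact (key.eqTb hb (by rw [hI]; exact hw)).trans hI
  · intro w hdeg
    obtain ⟨w1, hw2⟩ := w
    cases w1 with
    | F a =>
      have ha : a < α := hdeg
      constructor
      · intro hI
        exact (key.eqFc ha (by rw [hI])).trans hI
      · intro hJ
        exact (key.eqFa ha.le (by rw [hJ])).trans hJ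
    | zero => exact absurd hdeg (by simp [degLT])
    | T a =>
      have ha : a < α := hdeg
      constructor
      · intro hI
        exact ((key.eqTb ha.le (by rw [hI])).trans hI)
      · intro hJ
        exact (key.eqTd ha (by rw [hJ])).trans hJ

end ILP
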